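/- Let r, s be positive integers with r ≤ s + 1, let u, v, y, z ∈ ℂ with |u| ≤ 1, |v| ≤ 1, |z| < 1, let a_1,…,a_r, b_1,…,b_s, x ∈ ℂ with |b_1 y| < 1, x ≠ 0, 1 - b_1 q^j x ≠ 0 for all j ≥ 0, and 1 - b_i q^j ≠ 0 for all 2 ≤ i ≤ s and j ≥ 0. Then T(y D_q|v) applied to the function x ↦ rΦs(a_1,…,a_r; b_1 x, b_2,…,b_s; q, u, z) (where the q-derivative is taken in x), evaluated at x, equals ∑_{n=0}^{∞} u^{C(n,2)} (∏_{i=1}^{r}(a_i;q)_n) / ((q;q)_n (b_1 x;q)_n ∏_{i=2}^{s}(b_i;q)_n) · ((-1)^n q^{C(n,2)})^{1+s-r} z^n · ∑_{m=0}^{∞} v^{C(m,2)} (q^n;q)_m (b_1 y)^m / ((q;q)_m (b_1 q^n x;q)_m). -/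

import Mathlib

set_option maxHeartbeats 1000000

/-- The finite q-shifted factorial (a;q)_n = ∏_{j=0}^{n-1} (1 - a q^j). -/
noncomputable def qPoch (q a : ℂ) (n : ℕ) : ℂ :=
  ∏ j ∈ Finset.range n, (1 - a * q ^ j)

open Finset

noncomputable def Complex.abs : AbsoluteValue ℂ ℝ := IsAbsoluteValue.toAbsoluteValue (norm : ℂ → ℝ)

lemma Complex.norm_eq_abs (z : ℂ) : ‖z‖ = Complex.abs z := rfl

@[simp] lemma qPoch_zero (q a : ℂ) : qPoch q a 0 = 1 := Finset.prod_range_zero _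

lemma qPoch_succ (q a : ℂ) (n : ℕ) : qPoch q a (n+1) = qPoch q a n * (1 - a * q ^ n) :=
  Finset.prod_range_succ _ n

lemma qPoch_add (q a : ℂ) (n m : ℕ) :
    qPoch q a (n + m) = qPoch q a n * qPoch q (a * q ^ n) m := by
  unfold qPoch
  rw [Finset.prod_range_add]
  congr 1
  refine Finset.prod_congr rfl fun j _ => ?_
  rw [pow_add]; ring

lemma qPoch_ne_zero {q a : ℂ} (h : ∀ j, 1 - a * q ^ j ≠ 0) (n : ℕ) : qPoch q a n ≠ 0 :=
  Finset.prod_ne_zero_iff.2 fun j _ => h j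

lemma abs_qPoch_le {q : ℂ} (hq1 : Complex.abs q < 1) {a : ℂ} {M : ℝ} (hM : Complex.abs a ≤ M)
    (n : ℕ) : Complex.abs (qPoch q a n) ≤ Real.exp (M / (1 - Complex.abs q)) := by
  have h0q : (0:ℝ) ≤ Complex.abs q := Complex.abs.nonneg q
  have hM0 : (0:ℝ) ≤ M := le_trans (Complex.abs.nonneg a) hM
  have h1q : (0:ℝ) < 1 - Complex.abs q := by linarith
  calc Complex.abs (qPoch q a n) = ∏ j ∈ Finset.range n, Complex.abs (1 - a * q ^ j) := by
        rw [qPoch, map_prod]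
    _ ≤ ∏ j ∈ Finset.range n, Real.exp (M * Complex.abs q ^ j) := by
        refine Finset.prod_le_prod (fun j _ => Complex.abs.nonneg _) fun j _ => ?_
        have h1 : Complex.abs (1 - a * q ^ j) ≤ 1 + Complex.abs a * Complex.abs q ^ j := by
          calc Complex.abs (1 - a * q ^ j) ≤ Complex.abs 1 + Complex.abs (a * q ^ j) :=
                norm_sub_le 1 (a * q ^ j)
            _ = 1 + Complex.abs a * Complex.abs q ^ j := by
                rw [map_one, map_mul, map_pow]
        have h2 : 1 + Complex.abs a * Complex.abs q ^ j ≤ 1 + M * Complex.abs q ^ j := by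
          have := mul_le_mul_of_nonneg_right hM (pow_nonneg h0q j)
          linarith
        have h3 : 1 + M * Complex.abs q ^ j ≤ Real.exp (M * Complex.abs q ^ j) := by
          have := Real.add_one_le_exp (M * Complex.abs q ^ j)
          linarith
        linarith
    _ = Real.exp (∑ j ∈ Finset.range n, M * Complex.abs q ^ j) := (Real.exp_sum _ _).symm
    _ ≤ Real.exp (M / (1 - Complex.abs q)) := by
        apply Real.exp_le_exp.2
        rw [← Finset.mul_sum, div_eq_mul_inv]
        refine mul_le_mul_of_nonneg_left ?_ hM0
        have hsum : ∑ j ∈ Finset.range n, Complex.abs q ^ j ≤ ∑' j : ℕ, Complex.abs q ^ j :=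
          Summable.sum_le_tsum _ (fun i _ => pow_nonneg h0q i) (summable_geometric_of_lt_one h0q hq1)
        rwa [tsum_geometric_of_lt_one h0q hq1] at hsum

lemma prod_one_sub_ge {ι : Type*} (t : Finset ι) (x : ι → ℝ) (h0 : ∀ i ∈ t, 0 ≤ x i)
    (h1 : ∀ i ∈ t, x i ≤ 1) : 1 - ∑ i ∈ t, x i ≤ ∏ i ∈ t, (1 - x i) := by
  induction t using Finset.cons_induction with
  | empty => simp
  | cons a t ha ih =>
      rw [Finset.prod_cons, Finset.sum_cons]
      have hxa0 := h0 a (Finset.mem_cons_self a t)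
      have hxa1 := h1 a (Finset.mem_cons_self a t)
      have iht := ih (fun i hi => h0 i (Finset.mem_cons_of_mem hi))
        (fun i hi => h1 i (Finset.mem_cons_of_mem hi))
      have hs0 : 0 ≤ ∑ i ∈ t, x i := Finset.sum_nonneg fun i hi => h0 i (Finset.mem_cons_of_mem hi)
      calc 1 - (x a + ∑ i ∈ t, x i) ≤ (1 - x a) * (1 - ∑ i ∈ t, x i) := by nlinarith
        _ ≤ (1 - x a) * ∏ i ∈ t, (1 - x i) := by
            apply mul_le_mul_of_nonneg_left iht; linarith

lemma exists_qPoch_lb {q a : ℂ} (hq1 : Complex.abs q < 1) (h : ∀ j, 1 - a * q ^ j ≠ 0) :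
    ∃ ε : ℝ, 0 < ε ∧ ∀ n, ε ≤ Complex.abs (qPoch q a n) := by
  have h0q : (0:ℝ) ≤ Complex.abs q := Complex.abs.nonneg q
  have h1q : (0:ℝ) < 1 - Complex.abs q := by linarith
  have ha0 : (0:ℝ) ≤ Complex.abs a := Complex.abs.nonneg a
  -- find N with |a| * |q|^N / (1 - |q|) ≤ 1/2
  obtain ⟨N, hN⟩ : ∃ N : ℕ, Complex.abs q ^ N < (1 - Complex.abs q) / (2 * (Complex.abs a + 1)) :=
    exists_pow_lt_of_lt_one (by positivity) hq1
  have hkey : Complex.abs a * Complex.abs q ^ N * (1 - Complex.abs q)⁻¹ ≤ 1/2 := by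
    have h2 : Complex.abs a * Complex.abs q ^ N ≤ (Complex.abs a + 1) * Complex.abs q ^ N := by
      nlinarith [pow_nonneg h0q N]
    have h3 : (Complex.abs a + 1) * Complex.abs q ^ N ≤ (1 - Complex.abs q) / 2 := by
      have := mul_le_mul_of_nonneg_left hN.le (by positivity : (0:ℝ) ≤ Complex.abs a + 1)
      calc (Complex.abs a + 1) * Complex.abs q ^ N
          ≤ (Complex.abs a + 1) * ((1 - Complex.abs q) / (2 * (Complex.abs a + 1))) := this
        _ = (1 - Complex.abs q) / 2 := by field_simp
    calc Complex.abs a * Complex.abs q ^ N * (1 - Complex.abs q)⁻¹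
        ≤ ((1 - Complex.abs q)/2) * (1 - Complex.abs q)⁻¹ :=
          mul_le_mul_of_nonneg_right (h2.trans h3) (by positivity)
      _ = 1/2 := by field_simp
  set δ : ℝ := ∏ j ∈ Finset.range N, min (Complex.abs (1 - a * q ^ j)) 1 with hδ
  have hδpos : 0 < δ := Finset.prod_pos fun j _ => lt_min (AbsoluteValue.pos Complex.abs (h j)) one_pos
  refine ⟨δ / 2, by positivity, fun n => ?_⟩
  have habs : Complex.abs (qPoch q a n) = ∏ j ∈ Finset.range n, Complex.abs (1 - a * q ^ j) := by
    rw [qPoch, map_prod]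
  rcases le_total n N with hn | hn
  · -- n ≤ N
    have hsplit : (∏ j ∈ Finset.range n, min (Complex.abs (1 - a * q ^ j)) 1) *
        ∏ k ∈ Finset.range (N - n), min (Complex.abs (1 - a * q ^ (n + k))) 1 = δ := by
      rw [← Finset.prod_range_add, Nat.add_sub_cancel' hn, hδ]
    have h2 : (∏ k ∈ Finset.range (N - n), min (Complex.abs (1 - a * q ^ (n + k))) 1) ≤ 1 :=
      Finset.prod_le_one (fun k _ => le_min (Complex.abs.nonneg _) zero_le_one)
        (fun k _ => min_le_right _ _)
    have h3 : δ ≤ ∏ j ∈ Finset.range n, min (Complex.abs (1 - a * q ^ j)) 1 := by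
      rw [← hsplit]
      have hnn : (0:ℝ) ≤ ∏ j ∈ Finset.range n, min (Complex.abs (1 - a * q ^ j)) 1 :=
        Finset.prod_nonneg fun j _ => le_min (Complex.abs.nonneg _) zero_le_one
      nlinarith
    have h4 : (∏ j ∈ Finset.range n, min (Complex.abs (1 - a * q ^ j)) 1) ≤
        Complex.abs (qPoch q a n) := by
      rw [habs]
      exact Finset.prod_le_prod (fun j _ => le_min (Complex.abs.nonneg _) zero_le_one)
        (fun j _ => min_le_left _ _)
    linarith
  · -- N ≤ n
    obtain ⟨k, rfl⟩ : ∃ k, n = N + k := ⟨n - N, by omega⟩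
    rw [qPoch_add, map_mul]
    have hfirst : δ ≤ Complex.abs (qPoch q a N) := by
      rw [qPoch, map_prod]
      exact Finset.prod_le_prod (fun j _ => le_min (Complex.abs.nonneg _) zero_le_one)
        (fun j _ => min_le_left _ _)
    have hsum : ∀ m : ℕ, ∑ l ∈ Finset.range m, Complex.abs a * Complex.abs q ^ (N + l) ≤ 1/2 := by
      intro m
      have : ∑ l ∈ Finset.range m, Complex.abs a * Complex.abs q ^ (N + l)
          = Complex.abs a * Complex.abs q ^ N * ∑ l ∈ Finset.range m, Complex.abs q ^ l := by
        rw [Finset.mul_sum]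
        refine Finset.sum_congr rfl fun l _ => ?_
        rw [pow_add]; ring
      rw [this]
      have hgeo : ∑ l ∈ Finset.range m, Complex.abs q ^ l ≤ (1 - Complex.abs q)⁻¹ := by
        have hsum' : ∑ l ∈ Finset.range m, Complex.abs q ^ l ≤ ∑' l : ℕ, Complex.abs q ^ l :=
          Summable.sum_le_tsum _ (fun i _ => pow_nonneg h0q i) (summable_geometric_of_lt_one h0q hq1)
        rwa [tsum_geometric_of_lt_one h0q hq1] at hsum'
      calc Complex.abs a * Complex.abs q ^ N * ∑ l ∈ Finset.range m, Complex.abs q ^ l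
          ≤ Complex.abs a * Complex.abs q ^ N * (1 - Complex.abs q)⁻¹ :=
            mul_le_mul_of_nonneg_left hgeo (by positivity)
        _ ≤ 1/2 := hkey
    have hsecond : (1:ℝ)/2 ≤ Complex.abs (qPoch q (a * q ^ N) k) := by
      rw [qPoch, map_prod]
      have hterm : ∀ l ∈ Finset.range k,
          1 - Complex.abs a * Complex.abs q ^ (N + l) ≤ Complex.abs (1 - a * q ^ N * q ^ l) := by
        intro l _
        have : Complex.abs (a * q ^ N * q ^ l) = Complex.abs a * Complex.abs q ^ (N + l) := by
          rw [map_mul, map_mul, map_pow, map_pow, pow_add]; ring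
        calc 1 - Complex.abs a * Complex.abs q ^ (N + l)
            = Complex.abs 1 - Complex.abs (a * q ^ N * q ^ l) := by rw [map_one, this]
          _ ≤ Complex.abs (1 - a * q ^ N * q ^ l) := by
              simpa [Complex.norm_eq_abs] using norm_sub_norm_le (1:ℂ) (a * q ^ N * q ^ l)
      have hle1 : ∀ l ∈ Finset.range k, Complex.abs a * Complex.abs q ^ (N + l) ≤ 1 := by
        intro l hl
        have h1 : Complex.abs a * Complex.abs q ^ (N + l) ≤
            ∑ i ∈ Finset.range k, Complex.abs a * Complex.abs q ^ (N + i) := by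
          simpa using Finset.single_le_sum
            (f := fun l => Complex.abs a * Complex.abs q ^ (N + l))
            (fun i _ => by positivity) hl
        linarith [hsum k]
      calc (1:ℝ)/2 ≤ 1 - ∑ l ∈ Finset.range k, Complex.abs a * Complex.abs q ^ (N + l) := by
            linarith [hsum k]
        _ ≤ ∏ l ∈ Finset.range k, (1 - Complex.abs a * Complex.abs q ^ (N + l)) :=
            prod_one_sub_ge _ _ (fun l hl => by positivity) hle1
        _ ≤ ∏ l ∈ Finset.range k, Complex.abs (1 - a * q ^ N * q ^ l) :=
            Finset.prod_le_prod (fun l hl => by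
              have h1 : Complex.abs a * Complex.abs q ^ (N + l) ≤
                  ∑ i ∈ Finset.range k, Complex.abs a * Complex.abs q ^ (N + i) := by
                simpa using Finset.single_le_sum
                  (f := fun l => Complex.abs a * Complex.abs q ^ (N + l))
                  (fun i _ => by positivity) hl
              linarith [hsum k]) hterm
    calc δ / 2 = δ * (1/2) := by ring
      _ ≤ Complex.abs (qPoch q a N) * Complex.abs (qPoch q (a * q ^ N) k) :=
          mul_le_mul hfirst hsecond (by norm_num) (Complex.abs.nonneg _)

lemma exists_qPoch_window_lb {q a : ℂ} (hq1 : Complex.abs q < 1) (h : ∀ j, 1 - a * q ^ j ≠ 0) :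
    ∃ ε : ℝ, 0 < ε ∧ ∀ j k, ε ≤ Complex.abs (qPoch q (a * q ^ j) k) := by
  obtain ⟨ε, hε, hlb⟩ := exists_qPoch_lb hq1 h
  set B : ℝ := Real.exp (Complex.abs a / (1 - Complex.abs q)) with hB
  have hBpos : 0 < B := Real.exp_pos _
  refine ⟨ε / B, by positivity, fun j k => ?_⟩
  have hsplit := qPoch_add q a j k
  have h1 : ε ≤ Complex.abs (qPoch q a j) * Complex.abs (qPoch q (a * q ^ j) k) := by
    rw [← map_mul, ← hsplit]; exact hlb (j + k)
  have h2 : Complex.abs (qPoch q a j) ≤ B := abs_qPoch_le hq1 le_rfl j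
  have h3 : 0 < Complex.abs (qPoch q a j) := lt_of_lt_of_le hε (hlb j)
  rw [div_le_iff₀ hBpos]
  calc ε ≤ Complex.abs (qPoch q a j) * Complex.abs (qPoch q (a * q ^ j) k) := h1
    _ ≤ B * Complex.abs (qPoch q (a * q ^ j) k) :=
        mul_le_mul_of_nonneg_right h2 (Complex.abs.nonneg _)
    _ = Complex.abs (qPoch q (a * q ^ j) k) * B := mul_comm _ _

lemma exists_prod_lb {ι : Type*} (t : Finset ι) (f : ι → ℕ → ℂ)
    (h : ∀ i ∈ t, ∃ ε : ℝ, 0 < ε ∧ ∀ n, ε ≤ Complex.abs (f i n)) :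
    ∃ ε : ℝ, 0 < ε ∧ ∀ n, ε ≤ Complex.abs (∏ i ∈ t, f i n) := by
  induction t using Finset.cons_induction with
  | empty => exact ⟨1, one_pos, fun n => by simp⟩
  | cons a t ha ih =>
      obtain ⟨ε1, hε1, h1⟩ := h a (Finset.mem_cons_self a t)
      obtain ⟨ε2, hε2, h2⟩ := ih fun i hi => h i (Finset.mem_cons_of_mem hi)
      refine ⟨ε1 * ε2, mul_pos hε1 hε2, fun n => ?_⟩
      rw [Finset.prod_cons, map_mul]
      exact mul_le_mul (h1 n) (h2 n) hε2.le (Complex.abs.nonneg _)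

/-- The q-differential operator: (D_q f)(x) = (f(x) - f(qx))/x. -/
noncomputable def Dq (q : ℂ) (f : ℂ → ℂ) : ℂ → ℂ :=
  fun x => (f x - f (q * x)) / x

/-- The deformed q-exponential operator:
T(y D_q|v) f(x) = ∑_{m≥0} v^{C(m,2)} (y^m/(q;q)_m) (D_q^m f)(x). -/
noncomputable def Tq (q v y : ℂ) (f : ℂ → ℂ) (x : ℂ) : ℂ :=
  ∑' m : ℕ, v ^ (m.choose 2) * (y ^ m / qPoch q q m) * ((Dq q)^[m] f x)

/-- The deformed basic hypergeometric series
rΦs(a₁,…,a_r; b₁,…,b_s; q, u, z). -/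
noncomputable def dPhi (q u z : ℂ) {r s : ℕ} (a : Fin r → ℂ) (b : Fin s → ℂ) : ℂ :=
  ∑' n : ℕ,
    u ^ (n.choose 2) * (∏ i, qPoch q (a i) n) / (qPoch q q n * ∏ i, qPoch q (b i) n) *
      ((-1) ^ n * q ^ (n.choose 2)) ^ (1 + s - r) * z ^ n

theorem stmt13 (q u v y z : ℂ) (hq0 : 0 < ‖q‖) (hq1 : ‖q‖ < 1)
    (hu : ‖u‖ ≤ 1) (hv : ‖v‖ ≤ 1) (hz : ‖z‖ < 1)
    (r s : ℕ) (hr : 1 ≤ r) (hs : 0 < s) (hrs : r ≤ s + 1)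
    (a : Fin r → ℂ) (b : Fin s → ℂ) (x : ℂ)
    (hb1y : ‖b ⟨0, hs⟩ * y‖ < 1) (hx : x ≠ 0)
    (hb1 : ∀ j : ℕ, 1 - b ⟨0, hs⟩ * q ^ j * x ≠ 0)
    (hbi : ∀ i : Fin s, i ≠ ⟨0, hs⟩ → ∀ j : ℕ, 1 - b i * q ^ j ≠ 0) :
    Tq q v y
        (fun t => dPhi q u z a (Function.update b ⟨0, hs⟩ (b ⟨0, hs⟩ * t))) x =
      ∑' n : ℕ,
        u ^ (n.choose 2) * (∏ i, qPoch q (a i) n) /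
            (qPoch q q n * qPoch q (b ⟨0, hs⟩ * x) n *
              ∏ i ∈ Finset.univ.erase (⟨0, hs⟩ : Fin s), qPoch q (b i) n) *
          ((-1) ^ n * q ^ (n.choose 2)) ^ (1 + s - r) * z ^ n *
          ∑' m : ℕ,
            v ^ (m.choose 2) * qPoch q (q ^ n) m * (b ⟨0, hs⟩ * y) ^ m /
              (qPoch q q m * qPoch q (b ⟨0, hs⟩ * q ^ n * x) m) := by
  set i0 : Fin s := ⟨0, hs⟩ with hi0
  set c : ℂ := b i0 with hc
  have hqne : q ≠ 0 := by
    intro h; rw [h] at hq0; simp at hq0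
  set f : ℂ → ℂ := fun t => dPhi q u z a (Function.update b i0 (c * t)) with hf
  set A : ℕ → ℂ := fun n =>
    u ^ (n.choose 2) * (∏ i, qPoch q (a i) n) /
      (qPoch q q n * ∏ i ∈ Finset.univ.erase i0, qPoch q (b i) n) *
      ((-1) ^ n * q ^ (n.choose 2)) ^ (1 + s - r) * z ^ n with hA
  -- Step 1 : f as a series
  have hprod : ∀ (t : ℂ) (n : ℕ),
      (∏ i, qPoch q (Function.update b i0 (c * t) i) n) =
        qPoch q (c * t) n * ∏ i ∈ Finset.univ.erase i0, qPoch q (b i) n := by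
    intro t n
    have h1 : ∀ i : Fin s, qPoch q (Function.update b i0 (c * t) i) n =
        Function.update (fun i => qPoch q (b i) n) i0 (qPoch q (c * t) n) i := fun i =>
      Function.apply_update (fun _ w => qPoch q w n) b i0 (c * t) i
    rw [Finset.prod_congr rfl fun i _ => h1 i,
      Finset.prod_update_of_mem (Finset.mem_univ i0), Finset.erase_eq]
  have hfeq : ∀ t : ℂ, f t = ∑' n : ℕ, A n / qPoch q (c * t) n := by
    intro t
    rw [hf]
    show dPhi q u z a (Function.update b i0 (c * t)) = _
    rw [dPhi]
    refine tsum_congr fun n => ?_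
    rw [hprod t n, hA]
    simp only [div_eq_mul_inv, mul_inv]
    ring
  -- nonvanishing
  have hcx : ∀ j : ℕ, 1 - (c * x) * q ^ j ≠ 0 := by
    intro j h
    apply hb1 j
    rw [← h]; ring
  have hq' : ∀ j : ℕ, 1 - q * q ^ j ≠ 0 := by
    intro j h
    have h2 : q * q ^ j = 1 := by linear_combination -h
    have h3 : Complex.abs (q * q ^ j) < 1 := by
      rw [map_mul, map_pow]
      calc Complex.abs q * Complex.abs q ^ j ≤ Complex.abs q * 1 := by
            exact mul_le_mul_of_nonneg_left (pow_le_one₀ (Complex.abs.nonneg q) hq1.le)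
              (Complex.abs.nonneg q)
        _ < 1 := by rw [mul_one]; exact hq1
    rw [h2] at h3; simp at h3
  have hwne : ∀ j k : ℕ, qPoch q ((c * x) * q ^ j) k ≠ 0 := by
    intro j k
    apply qPoch_ne_zero
    intro l
    have := hcx (j + l)
    intro h; apply this
    rw [← h]; rw [pow_add]; ring
  -- lower/upper bounds
  obtain ⟨eq1, heq1, hq_lb⟩ := exists_qPoch_lb hq1 hq'
  obtain ⟨eB, heB, hB_lb⟩ := exists_prod_lb (Finset.univ.erase i0) (fun i n => qPoch q (b i) n)
    (fun i hi => exists_qPoch_lb hq1 (hbi i (Finset.mem_erase.1 hi).1))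
  obtain ⟨ew, hew, hw_lb⟩ := exists_qPoch_window_lb hq1 hcx
  set Ka : ℝ := ∏ i, Real.exp (Complex.abs (a i) / (1 - Complex.abs q)) with hKa
  have hKa0 : 0 < Ka := Finset.prod_pos fun i _ => Real.exp_pos _
  set Bq : ℝ := Real.exp (1 / (1 - Complex.abs q)) with hBq
  have hBq0 : 0 < Bq := Real.exp_pos _
  set KA : ℝ := Ka / (eq1 * eB) with hKA
  have hKA0 : 0 < KA := div_pos hKa0 (mul_pos heq1 heB)
  have habsA : ∀ n, Complex.abs (A n) ≤ KA * Complex.abs z ^ n := by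
    intro n
    have hAn : Complex.abs (A n) = Complex.abs u ^ (n.choose 2) *
        (∏ i, Complex.abs (qPoch q (a i) n)) /
        (Complex.abs (qPoch q q n) * Complex.abs (∏ i ∈ Finset.univ.erase i0, qPoch q (b i) n)) *
        (Complex.abs ((-1) ^ n * q ^ (n.choose 2))) ^ (1 + s - r) * Complex.abs z ^ n := by
      simp [hA, map_mul, map_div₀, map_pow, map_prod]
    rw [hAn]
    have h1 : Complex.abs u ^ (n.choose 2) ≤ 1 := pow_le_one₀ (Complex.abs.nonneg u) hu
    have h2 : (∏ i, Complex.abs (qPoch q (a i) n)) ≤ Ka :=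
      Finset.prod_le_prod (fun i _ => Complex.abs.nonneg _)
        (fun i _ => abs_qPoch_le hq1 le_rfl n)
    have h4 : (Complex.abs ((-1) ^ n * q ^ (n.choose 2))) ^ (1 + s - r) ≤ 1 := by
      apply pow_le_one₀ (Complex.abs.nonneg _)
      rw [map_mul, map_pow, map_pow]
      simp only [map_neg_eq_map, map_one, one_pow, one_mul]
      exact pow_le_one₀ (Complex.abs.nonneg q) hq1.le
    have h2' : (0:ℝ) ≤ ∏ i, Complex.abs (qPoch q (a i) n) :=
      Finset.prod_nonneg fun i _ => Complex.abs.nonneg _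
    have hnum : Complex.abs u ^ (n.choose 2) * (∏ i, Complex.abs (qPoch q (a i) n)) ≤ Ka := by
      calc Complex.abs u ^ (n.choose 2) * (∏ i, Complex.abs (qPoch q (a i) n))
          ≤ 1 * Ka := mul_le_mul h1 h2 h2' zero_le_one
        _ = Ka := one_mul Ka
    have hden : eq1 * eB ≤ Complex.abs (qPoch q q n) *
        Complex.abs (∏ i ∈ Finset.univ.erase i0, qPoch q (b i) n) :=
      mul_le_mul (hq_lb n) (hB_lb n) heB.le (Complex.abs.nonneg _)
    have hdiv : Complex.abs u ^ (n.choose 2) * (∏ i, Complex.abs (qPoch q (a i) n)) /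
        (Complex.abs (qPoch q q n) *
          Complex.abs (∏ i ∈ Finset.univ.erase i0, qPoch q (b i) n)) ≤ KA := by
      rw [hKA]
      exact div_le_div₀ hKa0.le hnum (mul_pos heq1 heB) hden
    calc Complex.abs u ^ (n.choose 2) * (∏ i, Complex.abs (qPoch q (a i) n)) /
        (Complex.abs (qPoch q q n) * Complex.abs (∏ i ∈ Finset.univ.erase i0, qPoch q (b i) n)) *
        (Complex.abs ((-1) ^ n * q ^ (n.choose 2))) ^ (1 + s - r) * Complex.abs z ^ n
        ≤ KA * 1 * Complex.abs z ^ n :=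
          mul_le_mul_of_nonneg_right
            (mul_le_mul hdiv h4 (pow_nonneg (Complex.abs.nonneg _) _) hKA0.le)
            (pow_nonneg (Complex.abs.nonneg z) n)
      _ = KA * Complex.abs z ^ n := by ring
  have habsQ : ∀ n m : ℕ, Complex.abs (qPoch q (q ^ n) m) ≤ Bq := by
    intro n m
    refine abs_qPoch_le hq1 ?_ m
    rw [map_pow]
    exact pow_le_one₀ (Complex.abs.nonneg q) hq1.le
  -- the function F
  set F : ℕ → ℕ → ℕ → ℂ := fun m j n =>
    A n * c ^ m * qPoch q (q ^ n) m / qPoch q ((c * x) * q ^ j) (n + m) with hF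
  have habsF : ∀ m j n, Complex.abs (F m j n) ≤
      (KA * Complex.abs c ^ m * Bq / ew) * Complex.abs z ^ n := by
    intro m j n
    have hFn : Complex.abs (F m j n) = Complex.abs (A n) * Complex.abs c ^ m *
        Complex.abs (qPoch q (q ^ n) m) / Complex.abs (qPoch q ((c * x) * q ^ j) (n + m)) := by
      simp [hF, map_mul, map_div₀, map_pow]
    rw [hFn]
    have hnum2 : Complex.abs (A n) * Complex.abs c ^ m * Complex.abs (qPoch q (q ^ n) m) ≤
        (KA * Complex.abs z ^ n) * Complex.abs c ^ m * Bq :=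
      mul_le_mul
        (mul_le_mul (habsA n) le_rfl (pow_nonneg (Complex.abs.nonneg c) m)
          (mul_nonneg hKA0.le (pow_nonneg (Complex.abs.nonneg z) n)))
        (habsQ n m) (Complex.abs.nonneg _)
        (mul_nonneg (mul_nonneg hKA0.le (pow_nonneg (Complex.abs.nonneg z) n))
          (pow_nonneg (Complex.abs.nonneg c) m))
    calc Complex.abs (A n) * Complex.abs c ^ m * Complex.abs (qPoch q (q ^ n) m) /
        Complex.abs (qPoch q ((c * x) * q ^ j) (n + m))
        ≤ (KA * Complex.abs z ^ n) * Complex.abs c ^ m * Bq / ew :=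
          div_le_div₀ (mul_nonneg (mul_nonneg
              (mul_nonneg hKA0.le (pow_nonneg (Complex.abs.nonneg z) n))
              (pow_nonneg (Complex.abs.nonneg c) m)) hBq0.le)
            hnum2 hew (hw_lb j (n + m))
      _ = (KA * Complex.abs c ^ m * Bq / ew) * Complex.abs z ^ n := by ring
  have hS : ∀ m j, Summable (F m j) := by
    intro m j
    apply Summable.of_norm_bounded
      (g := fun n => (KA * Complex.abs c ^ m * Bq / ew) * Complex.abs z ^ n)
      (Summable.mul_left _ (summable_geometric_of_lt_one (Complex.abs.nonneg z) hz))
    intro n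
    rw [Complex.norm_eq_abs]
    exact habsF m j n
  -- main induction
  have hIter : ∀ m j : ℕ, (Dq q)^[m] f (q ^ j * x) = ∑' n : ℕ, F m j n := by
    intro m
    induction m with
    | zero =>
        intro j
        rw [Function.iterate_zero_apply, hfeq]
        refine tsum_congr fun n => ?_
        have hbase : c * (q ^ j * x) = (c * x) * q ^ j := by ring
        simp only [hF, hbase, pow_zero, mul_one, Nat.add_zero, qPoch_zero]
    | succ m ih =>
        intro j
        rw [Function.iterate_succ_apply']
        have e1 : q * (q ^ j * x) = q ^ (j + 1) * x := by rw [pow_succ]; ring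
        show ((Dq q)^[m] f (q ^ j * x) - (Dq q)^[m] f (q * (q ^ j * x))) / (q ^ j * x) = _
        rw [e1, ih j, ih (j + 1)]
        rw [← Summable.tsum_sub (hS m j) (hS m (j + 1)), ← tsum_div_const]
        refine tsum_congr fun n => ?_
        have ht : q ^ j * x ≠ 0 := mul_ne_zero (pow_ne_zero j hqne) hx
        have hj : qPoch q ((c * x) * q ^ j) (n + m) ≠ 0 := hwne j (n + m)
        have hj1 : qPoch q ((c * x) * q ^ (j + 1)) (n + m) ≠ 0 := hwne (j + 1) (n + m)
        have hj' : qPoch q ((c * x) * q ^ j) (n + (m + 1)) ≠ 0 := hwne j (n + (m + 1))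
        have hP1 : qPoch q ((c * x) * q ^ j) (n + (m + 1)) =
            qPoch q ((c * x) * q ^ j) (n + m) * (1 - (c * x) * q ^ j * q ^ (n + m)) :=
          qPoch_succ q _ (n + m)
        have hP2 : qPoch q ((c * x) * q ^ j) (n + (m + 1)) =
            (1 - (c * x) * q ^ j) * qPoch q ((c * x) * q ^ (j + 1)) (n + m) := by
          have h0 : n + (m + 1) = 1 + (n + m) := by omega
          rw [h0, qPoch_add]
          congr 1
          · rw [qPoch_succ, qPoch]
            simp
          · congr 1
            rw [pow_succ]
            ring
        have hrel : qPoch q ((c * x) * q ^ j) (n + m) * (1 - (c * x) * q ^ j * q ^ (n + m)) =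
            (1 - (c * x) * q ^ j) * qPoch q ((c * x) * q ^ (j + 1)) (n + m) := by
          rw [← hP1, hP2]
        have hQ : qPoch q (q ^ n) (m + 1) = qPoch q (q ^ n) m * (1 - q ^ n * q ^ m) :=
          qPoch_succ q _ m
        simp only [hF]
        rw [div_sub_div _ _ hj hj1, div_div,
          div_eq_div_iff (mul_ne_zero (mul_ne_zero hj hj1) ht) hj', hQ, hP1]
        linear_combination (-(A n * c ^ m * qPoch q (q ^ n) m *
          qPoch q ((c * x) * q ^ j) (n + m))) * hrel
  -- double-indexed family
  set T : ℕ → ℕ → ℂ := fun m n => v ^ (m.choose 2) * (y ^ m / qPoch q q m) * F m 0 n with hT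
  have habsT : ∀ m n, Complex.abs (T m n) ≤
      (KA * Bq / (eq1 * ew)) * (Complex.abs (c * y) ^ m * Complex.abs z ^ n) := by
    intro m n
    have hTabs : Complex.abs (T m n) = Complex.abs v ^ (m.choose 2) *
        (Complex.abs y ^ m / Complex.abs (qPoch q q m)) * Complex.abs (F m 0 n) := by
      simp [hT, map_mul, map_div₀, map_pow]
    rw [hTabs]
    have h1 : Complex.abs v ^ (m.choose 2) ≤ 1 := pow_le_one₀ (Complex.abs.nonneg v) hv
    have h2 : Complex.abs y ^ m / Complex.abs (qPoch q q m) ≤ Complex.abs y ^ m / eq1 :=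
      div_le_div₀ (pow_nonneg (Complex.abs.nonneg y) m) le_rfl heq1 (hq_lb m)
    have h3 : (0:ℝ) ≤ Complex.abs y ^ m / eq1 :=
      div_nonneg (pow_nonneg (Complex.abs.nonneg y) m) heq1.le
    have step1 : Complex.abs v ^ (m.choose 2) *
        (Complex.abs y ^ m / Complex.abs (qPoch q q m)) ≤ 1 * (Complex.abs y ^ m / eq1) :=
      mul_le_mul h1 h2 (div_nonneg (pow_nonneg (Complex.abs.nonneg y) m)
        (Complex.abs.nonneg _)) zero_le_one
    calc Complex.abs v ^ (m.choose 2) * (Complex.abs y ^ m / Complex.abs (qPoch q q m)) *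
        Complex.abs (F m 0 n)
        ≤ (1 * (Complex.abs y ^ m / eq1)) *
            ((KA * Complex.abs c ^ m * Bq / ew) * Complex.abs z ^ n) :=
          mul_le_mul step1 (habsF m 0 n) (Complex.abs.nonneg _) (by linarith)
      _ = (KA * Bq / (eq1 * ew)) * (Complex.abs (c * y) ^ m * Complex.abs z ^ n) := by
          rw [map_mul, mul_pow]; ring
  have hTsum : Summable (Function.uncurry T) := by
    apply Summable.of_norm_bounded
      (g := fun p : ℕ × ℕ =>
        (KA * Bq / (eq1 * ew)) * (Complex.abs (c * y) ^ p.1 * Complex.abs z ^ p.2))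
      (Summable.mul_left _ (Summable.mul_of_nonneg
        (summable_geometric_of_lt_one (Complex.abs.nonneg _) hb1y)
        (summable_geometric_of_lt_one (Complex.abs.nonneg z) hz)
        (fun m => pow_nonneg (Complex.abs.nonneg _) m)
        (fun n => pow_nonneg (Complex.abs.nonneg z) n)))
    rintro ⟨m, n⟩
    rw [Complex.norm_eq_abs]
    exact habsT m n
  -- final assembly
  have hx0 : ∀ m, (Dq q)^[m] f x = ∑' n, F m 0 n := by
    intro m
    have h := hIter m 0
    rwa [pow_zero, one_mul] at h
  have hTqdef : Tq q v y f x =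
      ∑' m : ℕ, v ^ (m.choose 2) * (y ^ m / qPoch q q m) * ((Dq q)^[m] f x) := rfl
  rw [hTqdef]
  calc (∑' m : ℕ, v ^ (m.choose 2) * (y ^ m / qPoch q q m) * ((Dq q)^[m] f x))
      = ∑' m : ℕ, ∑' n : ℕ, T m n := by
        refine tsum_congr fun m => ?_
        rw [hx0 m]
        simp only [hT]
        exact tsum_mul_left.symm
    _ = ∑' n : ℕ, ∑' m : ℕ, T m n := (Summable.tsum_comm hTsum).symm
    _ = _ := by
        refine tsum_congr fun n => ?_
        have hsplitP : ∀ m : ℕ,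
            qPoch q (c * x) (n + m) = qPoch q (c * x) n * qPoch q (c * q ^ n * x) m := by
          intro m
          rw [qPoch_add]
          congr 2
          ring
        have hTmn : ∀ m, T m n = (A n / qPoch q (c * x) n) *
            (v ^ (m.choose 2) * qPoch q (q ^ n) m * (c * y) ^ m /
              (qPoch q q m * qPoch q (c * q ^ n * x) m)) := by
          intro m
          simp only [hT, hF, pow_zero, mul_one]
          rw [hsplitP m, mul_pow]
          simp only [div_eq_mul_inv, mul_inv]
          ring
        rw [tsum_congr hTmn, tsum_mul_left]
        have hAdiv : A n / qPoch q (c * x) n =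
            u ^ (n.choose 2) * (∏ i, qPoch q (a i) n) /
              (qPoch q q n * qPoch q (c * x) n *
                ∏ i ∈ Finset.univ.erase i0, qPoch q (b i) n) *
              ((-1) ^ n * q ^ (n.choose 2)) ^ (1 + s - r) * z ^ n := by
          simp only [hA, div_eq_mul_inv, mul_inv]
          ring
        rw [hAdiv]
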